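/- For every integer n ≥ 3, one has 1/log n < q_{n−1} < 1/log n + 2/(3·(log n)^2), where q_{n−1} = log(log(n−1)/log n) / log((n−1)/n). -/

import Mathlib

/-- For `0 < x < 2/5` one has `-(x + x²) < log (1 - x)`. -/
lemma log_one_sub_gt_aux (x : ℝ) (h0 : 0 < x) (h1 : x < 2/5) :
    -(x + x^2) < Real.log (1 - x) := by
  have hx1 : 1 - x > 0 := by linarith
  rw [Real.lt_log_iff_exp_lt hx1]
  set s : ℝ := x + x^2 with hs
  have hs0 : 0 ≤ s := by positivity
  have h4 : (1 + s/4)^4 ≤ Real.exp s := by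
    have h14 : (0:ℝ) ≤ 1 + s/4 := by linarith
    have := Real.add_one_le_exp (s/4)
    calc (1 + s/4)^4 ≤ (Real.exp (s/4))^4 := by
          apply pow_le_pow_left₀ h14; linarith
      _ = Real.exp s := by
          rw [← Real.exp_nat_mul]; ring_nf
  have hpoly : 1 < (1 + s/4)^4 * (1 - x) := by
    rw [hs]
    nlinarith [sq_nonneg x, sq_nonneg (x*x), pow_pos h0 3, pow_pos h0 4,
      sq_nonneg (x - 1/5), pow_pos h0 5]
  have hexp : 1 < Real.exp s * (1 - x) := by
    have h14 : (0:ℝ) < (1 + s/4)^4 := by positivity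
    nlinarith
  have hinv : Real.exp (-s) * Real.exp s = 1 := by
    rw [← Real.exp_add]; simp
  nlinarith [Real.exp_pos s, Real.exp_pos (-s)]

/-- For every integer `n ≥ 3` one has
`1/log n < q_{n-1} < 1/log n + 2/(3 (log n)^2)`, where
`q_{n-1} = log(log(n-1)/log n) / log((n-1)/n)`. -/
theorem q_refined_bounds (n : ℕ) (hn : 3 ≤ n) :
    1 / Real.log n <
      Real.log (Real.log ((n : ℝ) - 1) / Real.log n) / Real.log (((n : ℝ) - 1) / n) ∧
    Real.log (Real.log ((n : ℝ) - 1) / Real.log n) / Real.log (((n : ℝ) - 1) / n) <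
      1 / Real.log n + 2 / (3 * (Real.log n) ^ 2) := by
  have hn3 : (3:ℝ) ≤ (n:ℝ) := by exact_mod_cast hn
  have hn0 : (0:ℝ) < (n:ℝ) := by linarith
  have hn10 : (0:ℝ) < (n:ℝ) - 1 := by linarith
  set L : ℝ := Real.log n with hLdef
  have hL1 : (1:ℝ) < L := by
    rw [hLdef]
    exact (Real.lt_log_iff_exp_lt hn0).mpr
      (lt_of_lt_of_le (by linarith [Real.exp_one_lt_d9]) hn3)
  have hL0 : (0:ℝ) < L := by linarith
  set a : ℝ := L - Real.log ((n:ℝ) - 1) with hadef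
  have hlogn1 : Real.log ((n:ℝ) - 1) < L := Real.log_lt_log hn10 (by linarith)
  have ha0 : 0 < a := by rw [hadef]; linarith
  have halog : a = Real.log ((n:ℝ)/((n:ℝ)-1)) := by
    rw [Real.log_div (ne_of_gt hn0) (ne_of_gt hn10), hadef]
  have ha32 : a ≤ Real.log (3/2) := by
    rw [halog]
    apply Real.log_le_log (by positivity)
    rw [div_le_div_iff₀ hn10 (by norm_num : (0:ℝ) < 2)]
    linarith
  have hlog32 : Real.log (3/2) < 1/2 := by
    have := Real.log_lt_sub_one_of_pos (by norm_num : (0:ℝ) < 3/2) (by norm_num)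
    linarith
  have ha23 : a < 2/3 := by linarith
  have hL3 : Real.log 3 ≤ L := by
    rw [hLdef]; exact Real.log_le_log (by norm_num) hn3
  have h5a2L : 5 * a < 2 * L := by
    have h1 : Real.log (((3:ℝ)/2)^(5:ℕ)) < Real.log ((3:ℝ)^(2:ℕ)) :=
      Real.log_lt_log (by positivity) (by norm_num)
    rw [Real.log_pow, Real.log_pow] at h1
    push_cast at h1
    linarith
  set x : ℝ := a / L with hxdef
  have hx0 : 0 < x := div_pos ha0 hL0
  have hx25 : x < 2/5 := by rw [hxdef, div_lt_iff₀ hL0]; linarith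
  have e1 : Real.log ((n:ℝ) - 1) / L = 1 - x := by
    rw [hxdef, hadef]; field_simp; ring
  have e2 : Real.log (((n:ℝ)-1)/(n:ℝ)) = -a := by
    rw [Real.log_div (ne_of_gt hn10) (ne_of_gt hn0), hadef]; ring
  have hlo : Real.log (1 - x) < -x := by
    have h1x : (0:ℝ) < 1 - x := by linarith
    have := Real.log_lt_sub_one_of_pos h1x (by intro h; rw [sub_eq_self] at h; linarith)
    linarith
  have hhi : -(x + x^2) < Real.log (1 - x) := log_one_sub_gt_aux x hx0 hx25
  rw [e1, e2]
  have hQ : Real.log (1 - x) / (-a) = (- Real.log (1 - x)) / a := by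
    rw [div_neg, neg_div]
  have hxa : 1/L * a = x := by rw [hxdef]; ring
  constructor
  · rw [hQ, lt_div_iff₀ ha0]
    rw [hxa]; linarith
  · rw [hQ, div_lt_iff₀ ha0]
    have hsq : x^2 ≤ 2/(3*L^2) * a := by
      have h1 : a^2 ≤ (2/3)*a := by nlinarith
      have h2 : x^2 = a^2 / L^2 := by rw [hxdef, div_pow]
      rw [h2]
      calc a^2 / L^2 ≤ ((2/3)*a) / L^2 := by gcongr
        _ = 2/(3*L^2) * a := by ring
    have hexpand : (1/L + 2/(3*L^2)) * a = 1/L * a + 2/(3*L^2) * a := by ring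
    rw [hexpand, hxa]
    linarith
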